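/- arXiv:1804.11008 — 2 statements merged into one kernel-verified Lean document; each statement's English description precedes it below -/
import Mathlib

section
/- Let k be a nonnegative integer and let G be a finite simple graph on n vertices. If G has a set X of vertices such that the cut-rank of X in G is at most k and both |X| > n/3 and n − |X| > n/3, then G has a pair of disjoint sets A, B of vertices with |A| > n/(3·2^k) and |B| > n/(3·2^k) such that A is complete to B or A is anticomplete to B. -/
set_option maxHeartbeats 1000000

open Classical in
/-- The cut-rank of a vertex set `X` in `G`: the rank over GF(2) of the `X × (V ∖ X)`
matrix whose `(x, y)` entry is `1` iff `x` and `y` are adjacent in `G`. -/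
noncomputable def cutRank {V : Type} [Fintype V] [DecidableEq V]
    (G : SimpleGraph V) (X : Finset V) : ℕ :=
  Matrix.rank (Matrix.of fun (x : ↥X) (y : ↥(Xᶜ : Finset V)) =>
    if G.Adj ↑x ↑y then (1 : ZMod 2) else 0)

/-- If `G` has a vertex set `X` of cut-rank at most `k` with `|X| > n/3` and
`n - |X| > n/3`, then `G` has disjoint sets `A`, `B` with `|A|, |B| > n/(3·2^k)` such
that `A` is complete or anticomplete to `B`. -/
theorem strong_EH_of_low_cutRank {V : Type} [Fintype V] [DecidableEq V]
    (k : ℕ) (G : SimpleGraph V) (X : Finset V)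
    (hcut : cutRank G X ≤ k)
    (h1 : (Fintype.card V : ℝ) / 3 < X.card)
    (h2 : (Fintype.card V : ℝ) / 3 < (Fintype.card V : ℝ) - X.card) :
    ∃ A B : Finset V, Disjoint A B ∧
      (Fintype.card V : ℝ) / (3 * 2 ^ k) < A.card ∧
      (Fintype.card V : ℝ) / (3 * 2 ^ k) < B.card ∧
      ((∀ a ∈ A, ∀ b ∈ B, G.Adj a b) ∨ (∀ a ∈ A, ∀ b ∈ B, ¬ G.Adj a b)) := by
  classical
  set n := Fintype.card V with hn
  set M : Matrix ↥X ↥(Xᶜ : Finset V) (ZMod 2) :=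
    Matrix.of fun (x : ↥X) (y : ↥(Xᶜ : Finset V)) =>
      if G.Adj ↑x ↑y then (1 : ZMod 2) else 0 with hMdef
  have hrank : M.rank ≤ k := hcut
  set row : V → (↥(Xᶜ : Finset V)) → ZMod 2 :=
    fun v y => if G.Adj v ↑y then (1 : ZMod 2) else 0 with hrow
  set S : Submodule (ZMod 2) (↥(Xᶜ : Finset V) → ZMod 2) :=
    Submodule.span (ZMod 2) (Set.range M) with hS
  have hfr : Module.finrank (ZMod 2) S = M.rank := (Matrix.rank_eq_finrank_span_row M).symm
  have hrmem : ∀ x ∈ X, row x ∈ S := by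
    intro x hx
    have : row x = M ⟨x, hx⟩ := rfl
    rw [this]
    exact Submodule.subset_span ⟨⟨x, hx⟩, rfl⟩
  have hcardS : Fintype.card S ≤ 2 ^ k := by
    calc Fintype.card S = Fintype.card (ZMod 2) ^ Module.finrank (ZMod 2) S :=
          Module.card_eq_pow_finrank
      _ = 2 ^ M.rank := by rw [ZMod.card, hfr]
      _ ≤ 2 ^ k := Nat.pow_le_pow_right (by norm_num) hrank
  -- the set of row types
  set t : Finset (↥(Xᶜ : Finset V) → ZMod 2) := X.image row with ht
  have htmem : ∀ r ∈ t, r ∈ S := by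
    intro r hr
    obtain ⟨x, hx, hxr⟩ := Finset.mem_image.mp hr
    exact hxr ▸ hrmem x hx
  have htcard : t.card ≤ 2 ^ k := by
    have hinj : Function.Injective (fun r : {r // r ∈ t} => (⟨r.1, htmem r.1 r.2⟩ : S)) := by
      intro a b hab
      have hab' := congrArg (fun s : S => (s : ↥(Xᶜ : Finset V) → ZMod 2)) hab
      exact Subtype.ext hab'
    calc t.card = Fintype.card {r // r ∈ t} := (Fintype.card_coe t).symm
      _ ≤ Fintype.card S := Fintype.card_le_of_injective _ hinj
      _ ≤ 2 ^ k := hcardS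
  have hXpos : 0 < X.card := by
    have : (0 : ℝ) < X.card := lt_of_le_of_lt (by positivity) h1
    exact_mod_cast this
  have htne : t.Nonempty := (Finset.image_nonempty).mpr (Finset.card_pos.mp hXpos)
  obtain ⟨r, hr, hrmax⟩ := t.exists_max_image (fun r => (X.filter (fun v => row v = r)).card) htne
  set A : Finset V := X.filter (fun v => row v = r) with hA
  obtain ⟨a0, ha0X, ha0r⟩ := Finset.mem_image.mp hr
  have hXA : X.card ≤ 2 ^ k * A.card := by
    have hsum : X.card = ∑ s ∈ t, (X.filter (fun v => row v = s)).card :=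
      Finset.card_eq_sum_card_fiberwise (fun x hx => Finset.mem_image_of_mem row hx)
    calc X.card = ∑ s ∈ t, (X.filter (fun v => row v = s)).card := hsum
      _ ≤ t.card * A.card := by
          rw [← smul_eq_mul]
          exact Finset.sum_le_card_nsmul t _ A.card (fun s hs => hrmax s hs)
      _ ≤ 2 ^ k * A.card := Nat.mul_le_mul_right _ htcard
  -- adjacency transfer
  have hadj : ∀ a ∈ A, ∀ b ∈ (Xᶜ : Finset V), (G.Adj a b ↔ G.Adj a0 b) := by
    intro a ha b hb
    have h₁ : row a = row a0 := by
      rw [(Finset.mem_filter.mp ha).2, ha0r]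
    have h₂ := congrFun h₁ ⟨b, hb⟩
    simp only [hrow] at h₂
    by_cases hab : G.Adj a b <;> by_cases h0 : G.Adj a0 b
    · exact iff_of_true hab h0
    · rw [if_pos hab, if_neg h0] at h₂; exact absurd h₂ one_ne_zero
    · rw [if_neg hab, if_pos h0] at h₂; exact absurd h₂.symm one_ne_zero
    · exact iff_of_false hab h0
  set B1 : Finset V := (Xᶜ : Finset V).filter (fun y => G.Adj a0 y) with hB1
  set B0 : Finset V := (Xᶜ : Finset V).filter (fun y => ¬ G.Adj a0 y) with hB0
  have hBsum : B1.card + B0.card = (Xᶜ : Finset V).card :=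
    Finset.card_filter_add_card_filter_not _
  have hdisj : ∀ B' : Finset V, B' ⊆ (Xᶜ : Finset V) → Disjoint A B' := by
    intro B' hB'
    refine Finset.disjoint_left.mpr (fun a ha hab => ?_)
    have := hB' hab
    rw [Finset.mem_compl] at this
    exact this ((Finset.mem_filter.mp ha).1)
  have hXc_real : (((Xᶜ : Finset V)).card : ℝ) = (n : ℝ) - X.card := by
    rw [Finset.card_compl, Nat.cast_sub (Finset.card_le_univ X)]
  have hAbound : (n : ℝ) / (3 * 2 ^ k) < A.card := by
    have hXA' : (X.card : ℝ) ≤ 2 ^ k * A.card := by exact_mod_cast hXA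
    rw [div_lt_iff₀ (by positivity)] at h1 ⊢
    nlinarith [h1, hXA']
  have hcomplete : ∀ a ∈ A, ∀ b ∈ B1, G.Adj a b := by
    intro a ha b hb
    obtain ⟨hbX, hb0⟩ := Finset.mem_filter.mp hb
    exact (hadj a ha b hbX).mpr hb0
  have hanti : ∀ a ∈ A, ∀ b ∈ B0, ¬ G.Adj a b := by
    intro a ha b hb
    obtain ⟨hbX, hb0⟩ := Finset.mem_filter.mp hb
    exact fun h => hb0 ((hadj a ha b hbX).mp h)
  rcases Nat.eq_zero_or_pos k with hk | hk
  · -- k = 0 : the row type r is 0, so B1 is empty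
    subst hk
    have hsub : Subsingleton S := by
      rw [← Fintype.card_le_one_iff_subsingleton]
      simpa using hcardS
    have hr0 : r = 0 := by
      have h1' : (⟨r, ha0r ▸ hrmem a0 ha0X⟩ : S) = ⟨0, S.zero_mem⟩ := hsub.elim _ _
      exact congrArg Subtype.val h1'
    have hB1e : B1 = ∅ := by
      rw [Finset.eq_empty_iff_forall_notMem]
      intro y hy
      obtain ⟨hyX, hy0⟩ := Finset.mem_filter.mp hy
      have := congrFun (ha0r.trans hr0) ⟨y, hyX⟩
      simp only [hrow] at this
      rw [if_pos hy0] at this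
      exact one_ne_zero this
    have hB1c : B1.card = 0 := by rw [hB1e]; rfl
    have hB0e : B0.card = (Xᶜ : Finset V).card := by omega
    refine ⟨A, B0, hdisj B0 (Finset.filter_subset _ _), hAbound, ?_, Or.inr hanti⟩
    rw [hB0e, hXc_real]
    simpa using h2
  · -- k ≥ 1 : one of B0, B1 has more than half of Xᶜ
    have h2k : (2 : ℝ) ≤ 2 ^ k := by
      calc (2 : ℝ) = 2 ^ 1 := (pow_one 2).symm
        _ ≤ 2 ^ k := by
          apply pow_le_pow_right₀ (by norm_num) hk
    have hXc2 : (n : ℝ) / 3 < (B1.card : ℝ) + B0.card := by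
      have : ((B1.card : ℝ) + B0.card) = ((Xᶜ : Finset V).card : ℝ) := by exact_mod_cast hBsum
      rw [this, hXc_real]; exact h2
    rcases le_total B1.card B0.card with hle | hle
    · refine ⟨A, B0, hdisj B0 (Finset.filter_subset _ _), hAbound, ?_, Or.inr hanti⟩
      have hle' : (B1.card : ℝ) ≤ B0.card := by exact_mod_cast hle
      rw [div_lt_iff₀ (by positivity)] at hXc2 ⊢
      nlinarith
    · refine ⟨A, B1, hdisj B1 (Finset.filter_subset _ _), hAbound, ?_, Or.inl hcomplete⟩
      have hle' : (B0.card : ℝ) ≤ B1.card := by exact_mod_cast hle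
      rw [div_lt_iff₀ (by positivity)] at hXc2 ⊢
      nlinarith
end

section
/- Let 𝒢 be a class of finite simple graphs closed under taking induced subgraphs. If there exists ε > 0 such that every graph G in 𝒢 on at least 2 vertices has a pair of disjoint sets A, B of vertices with |A| ≥ ε|V(G)| and |B| ≥ ε|V(G)| such that A is complete to B or A is anticomplete to B, then there exists c > 0 such that every graph G in 𝒢 satisfies max(α(G), ω(G)) ≥ |V(G)|^c, where α(G) is the maximum size of an independent set of G and ω(G) is the maximum size of a clique of G. (That is, the strong Erdős–Hajnal property implies the Erdős–Hajnal property.) -/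
/-- The clique number `ω(G)`: the maximum size of a set of pairwise adjacent vertices. -/
noncomputable def cliqueNum {V : Type} [Fintype V] (G : SimpleGraph V) : ℕ :=
  sSup {n | ∃ s : Finset V, s.card = n ∧ ∀ x ∈ s, ∀ y ∈ s, x ≠ y → G.Adj x y}

/-- The independence number `α(G)`: the maximum size of a set of pairwise non-adjacent
vertices. -/
noncomputable def indepNum {V : Type} [Fintype V] (G : SimpleGraph V) : ℕ :=
  sSup {n | ∃ s : Finset V, s.card = n ∧ ∀ x ∈ s, ∀ y ∈ s, x ≠ y → ¬ G.Adj x y}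

lemma card_le_indepNum {V : Type} [Fintype V] {G : SimpleGraph V} {s : Finset V}
    (h : ∀ x ∈ s, ∀ y ∈ s, x ≠ y → ¬ G.Adj x y) : s.card ≤ indepNum G :=
  le_csSup ⟨Fintype.card V, fun _ ⟨t, ht, _⟩ => le_of_eq_of_le ht.symm t.card_le_univ⟩
    ⟨s, rfl, h⟩

lemma card_le_cliqueNum {V : Type} [Fintype V] {G : SimpleGraph V} {s : Finset V}
    (h : ∀ x ∈ s, ∀ y ∈ s, x ≠ y → G.Adj x y) : s.card ≤ cliqueNum G :=
  le_csSup ⟨Fintype.card V, fun _ ⟨t, ht, _⟩ => le_of_eq_of_le ht.symm t.card_le_univ⟩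
    ⟨s, rfl, h⟩

lemma indep_witness_induce {V : Type} [Fintype V] (G : SimpleGraph V) (A : Finset V) :
    ∃ s : Finset V, s ⊆ A ∧ s.card = indepNum (G.induce (↑A : Set V)) ∧
      ∀ x ∈ s, ∀ y ∈ s, x ≠ y → ¬ G.Adj x y := by
  have h : indepNum (G.induce (↑A : Set V)) ∈
      {n | ∃ s : Finset (↑A : Set V), s.card = n ∧
        ∀ x ∈ s, ∀ y ∈ s, x ≠ y → ¬ (G.induce (↑A : Set V)).Adj x y} :=
    Nat.sSup_mem ⟨0, ∅, by simp⟩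
      ⟨Fintype.card (↑A : Set V), fun _ ⟨t, ht, _⟩ => le_of_eq_of_le ht.symm t.card_le_univ⟩
  obtain ⟨t, ht, hind⟩ := h
  refine ⟨t.map (Function.Embedding.subtype _), ?_, by simp [ht], ?_⟩
  · intro x hx
    obtain ⟨x', _, rfl⟩ := Finset.mem_map.1 hx
    exact Finset.mem_coe.1 x'.2
  · intro x hx y hy hxy hadj
    obtain ⟨x', hx', rfl⟩ := Finset.mem_map.1 hx
    obtain ⟨y', hy', rfl⟩ := Finset.mem_map.1 hy
    exact hind x' hx' y' hy' (fun h => hxy (by rw [h])) hadj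

lemma clique_witness_induce {V : Type} [Fintype V] (G : SimpleGraph V) (A : Finset V) :
    ∃ s : Finset V, s ⊆ A ∧ s.card = cliqueNum (G.induce (↑A : Set V)) ∧
      ∀ x ∈ s, ∀ y ∈ s, x ≠ y → G.Adj x y := by
  have h : cliqueNum (G.induce (↑A : Set V)) ∈
      {n | ∃ s : Finset (↑A : Set V), s.card = n ∧
        ∀ x ∈ s, ∀ y ∈ s, x ≠ y → (G.induce (↑A : Set V)).Adj x y} :=
    Nat.sSup_mem ⟨0, ∅, by simp⟩
      ⟨Fintype.card (↑A : Set V), fun _ ⟨t, ht, _⟩ => le_of_eq_of_le ht.symm t.card_le_univ⟩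
  obtain ⟨t, ht, hind⟩ := h
  refine ⟨t.map (Function.Embedding.subtype _), ?_, by simp [ht], ?_⟩
  · intro x hx
    obtain ⟨x', _, rfl⟩ := Finset.mem_map.1 hx
    exact Finset.mem_coe.1 x'.2
  · intro x hx y hy hxy
    obtain ⟨x', hx', rfl⟩ := Finset.mem_map.1 hx
    obtain ⟨y', hy', rfl⟩ := Finset.mem_map.1 hy
    exact hind x' hx' y' hy' (fun h => hxy (by rw [h]))

/-- The strong Erdős–Hajnal property implies the Erdős–Hajnal property: if a class `𝒢` of
finite graphs closed under taking induced subgraphs has some `ε > 0` such that every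
`G ∈ 𝒢` on at least 2 vertices has a complete or anticomplete pair of disjoint linear-size
sets, then there is `c > 0` with `max(α(G), ω(G)) ≥ |V(G)|^c` for every `G ∈ 𝒢`. -/
theorem EH_of_strong_EH
    (𝒢 : ∀ (V : Type) [Fintype V], SimpleGraph V → Prop)
    (hclosed : ∀ (V : Type) [Fintype V] (G : SimpleGraph V), 𝒢 V G →
      ∀ (W : Type) [Fintype W] (H : SimpleGraph W),
        (∃ s : Finset V, Nonempty (H ≃g G.induce (↑s : Set V))) → 𝒢 W H)
    (ε : ℝ) (hε : 0 < ε)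
    (hSEH : ∀ (V : Type) [Fintype V] (G : SimpleGraph V), 𝒢 V G →
      2 ≤ Fintype.card V →
      ∃ A B : Finset V, Disjoint A B ∧
        ε * Fintype.card V ≤ A.card ∧ ε * Fintype.card V ≤ B.card ∧
        ((∀ a ∈ A, ∀ b ∈ B, G.Adj a b) ∨ (∀ a ∈ A, ∀ b ∈ B, ¬ G.Adj a b))) :
    ∃ c : ℝ, 0 < c ∧ ∀ (V : Type) [Fintype V] (G : SimpleGraph V), 𝒢 V G →
      (Fintype.card V : ℝ) ^ c ≤ ((max (indepNum G) (cliqueNum G) : ℕ) : ℝ) := by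
  set ε' : ℝ := min ε (1/2) with hε'def
  have hε'pos : (0:ℝ) < ε' := lt_min hε (by norm_num)
  have hε'le : ε' ≤ 1/2 := min_le_right _ _
  have hε'lε : ε' ≤ ε := min_le_left _ _
  have hlogneg : Real.log ε' < 0 := Real.log_neg hε'pos (by linarith)
  set c' : ℝ := Real.log 2 / (- Real.log ε') with hc'def
  have hc'pos : 0 < c' := div_pos (Real.log_pos (by norm_num)) (by linarith)
  have hkey : ε' ^ c' = 1/2 := by
    rw [Real.rpow_def_of_pos hε'pos]
    have hne : Real.log ε' ≠ 0 := ne_of_lt hlogneg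
    have h1 : Real.log ε' * c' = - Real.log 2 := by
      rw [hc'def]
      field_simp
    rw [h1, Real.exp_neg, Real.exp_log (by norm_num)]
    norm_num
  have key : ∀ n : ℕ, ∀ (V : Type) [_i : Fintype V] (G : SimpleGraph V), 𝒢 V G →
      Fintype.card V = n → (n:ℝ) ^ c' ≤ ((indepNum G * cliqueNum G : ℕ) : ℝ) := by
    intro n
    induction n using Nat.strong_induction_on with
    | _ n IH =>
      intro V _i G hG hcard
      classical
      rcases Nat.lt_or_ge n 2 with hn2 | hn2
      · interval_cases n
        · simp only [Nat.cast_zero, Real.zero_rpow (ne_of_gt hc'pos)]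
          positivity
        · -- one vertex
          rw [Nat.cast_one, Real.one_rpow]
          have ⟨v⟩ : Nonempty V := Fintype.card_pos_iff.1 (by omega)
          have h1 : 1 ≤ indepNum G := by
            have := card_le_indepNum (G := G) (s := {v}) (by simp)
            simpa using this
          have h2 : 1 ≤ cliqueNum G := by
            have := card_le_cliqueNum (G := G) (s := {v}) (by simp)
            simpa using this
          have : 1 ≤ indepNum G * cliqueNum G := Nat.one_le_iff_ne_zero.2 (by positivity)
          exact_mod_cast this
      · obtain ⟨A, B, hdisj, hAc, hBc, hcase⟩ := hSEH V G hG (hcard ▸ hn2)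
        rw [hcard] at hAc hBc
        have hnpos : (0:ℝ) < n := by positivity
        have hApos : 0 < A.card := by
          by_contra h
          push_neg at h
          interval_cases hA : A.card
          · simp [hA] at hAc; nlinarith
        have hBpos : 0 < B.card := by
          by_contra h
          push_neg at h
          interval_cases hB : B.card
          · simp [hB] at hBc; nlinarith
        have hsum : A.card + B.card ≤ n := by
          rw [← Finset.card_union_of_disjoint hdisj, ← hcard]
          exact Finset.card_le_univ _
        have hAlt : A.card < n := by omega
        have hBlt : B.card < n := by omega
        -- induced subgraphs are in the class
        have hGA : 𝒢 (↑A : Set V) (G.induce (↑A : Set V)) :=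
          hclosed V G hG _ _ ⟨A, ⟨SimpleGraph.Iso.refl⟩⟩
        have hGB : 𝒢 (↑B : Set V) (G.induce (↑B : Set V)) :=
          hclosed V G hG _ _ ⟨B, ⟨SimpleGraph.Iso.refl⟩⟩
        have IHA := IH A.card hAlt (↑A : Set V) (G.induce (↑A : Set V)) hGA (Fintype.card_coe A)
        have IHB := IH B.card hBlt (↑B : Set V) (G.induce (↑B : Set V)) hGB (Fintype.card_coe B)
        set αA := indepNum (G.induce (↑A : Set V))
        set ωA := cliqueNum (G.induce (↑A : Set V))
        set αB := indepNum (G.induce (↑B : Set V))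
        set ωB := cliqueNum (G.induce (↑B : Set V))
        -- (1/2) * n^c' ≤ each product
        have hhalfA : (1/2) * (n:ℝ) ^ c' ≤ ((αA * ωA : ℕ) : ℝ) := by
          refine le_trans ?_ IHA
          have h1 : ε' * (n:ℝ) ≤ (A.card : ℝ) := le_trans (by nlinarith) hAc
          have h2 : (ε' * (n:ℝ)) ^ c' ≤ (A.card : ℝ) ^ c' :=
            Real.rpow_le_rpow (by positivity) h1 (le_of_lt hc'pos)
          rw [Real.mul_rpow (le_of_lt hε'pos) (by positivity), hkey] at h2
          linarith
        have hhalfB : (1/2) * (n:ℝ) ^ c' ≤ ((αB * ωB : ℕ) : ℝ) := by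
          refine le_trans ?_ IHB
          have h1 : ε' * (n:ℝ) ≤ (B.card : ℝ) := le_trans (by nlinarith) hBc
          have h2 : (ε' * (n:ℝ)) ^ c' ≤ (B.card : ℝ) ^ c' :=
            Real.rpow_le_rpow (by positivity) h1 (le_of_lt hc'pos)
          rw [Real.mul_rpow (le_of_lt hε'pos) (by positivity), hkey] at h2
          linarith
        -- combine
        have hprod : αA * ωA + αB * ωB ≤ indepNum G * cliqueNum G := by
          obtain ⟨sA, hsAsub, hsAcard, hsAind⟩ := indep_witness_induce G A
          obtain ⟨sB, hsBsub, hsBcard, hsBind⟩ := indep_witness_induce G B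
          obtain ⟨tA, htAsub, htAcard, htAcl⟩ := clique_witness_induce G A
          obtain ⟨tB, htBsub, htBcard, htBcl⟩ := clique_witness_induce G B
          have hωA : ωA ≤ cliqueNum G := le_of_eq_of_le htAcard.symm (card_le_cliqueNum htAcl)
          have hωB : ωB ≤ cliqueNum G := le_of_eq_of_le htBcard.symm (card_le_cliqueNum htBcl)
          have hαA : αA ≤ indepNum G := le_of_eq_of_le hsAcard.symm (card_le_indepNum hsAind)
          have hαB : αB ≤ indepNum G := le_of_eq_of_le hsBcard.symm (card_le_indepNum hsBind)
          rcases hcase with hcomp | hanti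
          · -- complete: big clique tA ∪ tB
            have hdisj' : Disjoint tA tB :=
              Finset.disjoint_of_subset_left htAsub (Finset.disjoint_of_subset_right htBsub hdisj)
            have hcl : ∀ x ∈ tA ∪ tB, ∀ y ∈ tA ∪ tB, x ≠ y → G.Adj x y := by
              intro x hx y hy hxy
              rcases Finset.mem_union.1 hx with hx | hx <;>
                rcases Finset.mem_union.1 hy with hy | hy
              · exact htAcl x hx y hy hxy
              · exact hcomp x (htAsub hx) y (htBsub hy)
              · exact (hcomp y (htAsub hy) x (htBsub hx)).symm
              · exact htBcl x hx y hy hxy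
            have hω : ωA + ωB ≤ cliqueNum G := by
              have := card_le_cliqueNum hcl
              rwa [Finset.card_union_of_disjoint hdisj', htAcard, htBcard] at this
            calc αA * ωA + αB * ωB ≤ indepNum G * ωA + indepNum G * ωB := by
                  gcongr
              _ = indepNum G * (ωA + ωB) := by ring
              _ ≤ indepNum G * cliqueNum G := by gcongr
          · -- anticomplete: big independent set sA ∪ sB
            have hdisj' : Disjoint sA sB :=
              Finset.disjoint_of_subset_left hsAsub (Finset.disjoint_of_subset_right hsBsub hdisj)
            have hind : ∀ x ∈ sA ∪ sB, ∀ y ∈ sA ∪ sB, x ≠ y → ¬ G.Adj x y := by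
              intro x hx y hy hxy
              rcases Finset.mem_union.1 hx with hx | hx <;>
                rcases Finset.mem_union.1 hy with hy | hy
              · exact hsAind x hx y hy hxy
              · exact hanti x (hsAsub hx) y (hsBsub hy)
              · exact fun h => hanti y (hsAsub hy) x (hsBsub hx) h.symm
              · exact hsBind x hx y hy hxy
            have hα : αA + αB ≤ indepNum G := by
              have := card_le_indepNum hind
              rwa [Finset.card_union_of_disjoint hdisj', hsAcard, hsBcard] at this
            calc αA * ωA + αB * ωB ≤ αA * cliqueNum G + αB * cliqueNum G := by
                  gcongr
              _ = (αA + αB) * cliqueNum G := by ring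
              _ ≤ indepNum G * cliqueNum G := by gcongr
        calc (n:ℝ) ^ c' = (1/2) * (n:ℝ) ^ c' + (1/2) * (n:ℝ) ^ c' := by ring
          _ ≤ ((αA * ωA : ℕ) : ℝ) + ((αB * ωB : ℕ) : ℝ) := by linarith
          _ ≤ ((indepNum G * cliqueNum G : ℕ) : ℝ) := by exact_mod_cast hprod
  refine ⟨c' / 2, by positivity, ?_⟩
  intro V _i G hG
  have h := key (Fintype.card V) V G hG rfl
  set M := max (indepNum G) (cliqueNum G) with hM
  have hMle : indepNum G * cliqueNum G ≤ M * M :=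
    Nat.mul_le_mul (le_max_left _ _) (le_max_right _ _)
  have h2 : ((Fintype.card V : ℝ) ^ (c'/2)) ^ 2 ≤ ((M:ℕ):ℝ) ^ 2 := by
    have : ((Fintype.card V : ℝ) ^ (c'/2)) ^ 2 = (Fintype.card V : ℝ) ^ c' := by
      rw [← Real.rpow_natCast ((Fintype.card V : ℝ) ^ (c'/2)) 2,
        ← Real.rpow_mul (Nat.cast_nonneg _)]
      norm_num
    rw [this]
    calc (Fintype.card V : ℝ) ^ c' ≤ ((indepNum G * cliqueNum G : ℕ) : ℝ) := h
      _ ≤ ((M * M : ℕ) : ℝ) := by exact_mod_cast hMle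
      _ = ((M:ℕ):ℝ) ^ 2 := by push_cast; ring
  exact (pow_le_pow_iff_left₀ (by positivity) (by positivity) (by norm_num)).1 h2
end
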